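/- Let $n \ge 2$ and $c \ge (n-2)\frac{\pi}{2}$. Then the superlevel set $\{\lambda \in \mathbb{R}^n : \sum_{i=1}^n \arctan \lambda_i \ge c\}$ is a convex subset of $\mathbb{R}^n$. -/

import Mathlib

open Real Finset

lemma arctan_add_le {a b : ℝ} (ha : 0 ≤ a) (hb : 0 ≤ b) :
    Real.arctan (a + b) ≤ Real.arctan a + Real.arctan b := by
  have key : AntitoneOn (fun u => Real.arctan (u + b) - Real.arctan u) (Set.Ici 0) := by
    have hd : ∀ u : ℝ, HasDerivAt (fun u => Real.arctan (u + b) - Real.arctan u)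
        (1 / (1 + (u + b) ^ 2) - 1 / (1 + u ^ 2)) u := by
      intro u
      have h1 : HasDerivAt (fun u : ℝ => Real.arctan (u + b))
          (1 / (1 + (u + b) ^ 2) * 1) u := ((hasDerivAt_id u).add_const b).arctan
      have h2 := Real.hasDerivAt_arctan u
      exact (h1.sub h2).congr_deriv (by ring)
    apply antitoneOn_of_deriv_nonpos (convex_Ici 0)
    · exact fun u _ => ((hd u).continuousAt).continuousWithinAt
    · exact fun u _ => ((hd u).differentiableAt).differentiableWithinAt
    · intro u hu
      rw [(hd u).deriv]
      have hu' : (0:ℝ) ≤ u := le_of_lt (by simpa using hu)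
      have h1 : (0:ℝ) < 1 + u ^ 2 := by positivity
      have h2 : 1 + u ^ 2 ≤ 1 + (u + b) ^ 2 := by nlinarith
      have := one_div_le_one_div_of_le h1 h2
      linarith
  have h := key (Set.mem_Ici.2 (le_refl 0)) (Set.mem_Ici.2 ha) ha
  simp only [zero_add, Real.arctan_zero, sub_zero] at h
  linarith

lemma arctan_sum_le {ι : Type*} [DecidableEq ι] (s : Finset ι) (y : ι → ℝ)
    (h : ∀ i ∈ s, 0 ≤ y i) :
    Real.arctan (∑ i ∈ s, y i) ≤ ∑ i ∈ s, Real.arctan (y i) := by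
  induction s using Finset.induction_on with
  | empty => simp
  | @insert a s' hx ih =>
    rw [Finset.sum_insert hx, Finset.sum_insert hx]
    have h1 : 0 ≤ y a := h a (Finset.mem_insert_self a s')
    have h2 : 0 ≤ ∑ i ∈ s', y i :=
      Finset.sum_nonneg fun i hi => h i (Finset.mem_insert_of_mem hi)
    calc Real.arctan (y a + ∑ i ∈ s', y i) ≤ Real.arctan (y a) + Real.arctan (∑ i ∈ s', y i) :=
          arctan_add_le h1 h2
      _ ≤ _ := by
          have := ih fun i hi => h i (Finset.mem_insert_of_mem hi)
          linarith

-- pairwise positivity on the supercritical region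
lemma pairwise_pos {n : ℕ} (hn : 2 ≤ n) (x : Fin n → ℝ)
    (hx : ((n:ℝ) - 2) * (π/2) < ∑ i, Real.arctan (x i)) {i j : Fin n} (hij : i ≠ j) :
    0 < x i + x j := by
  classical
  have hsub : ({i, j} : Finset (Fin n)) ⊆ Finset.univ := Finset.subset_univ _
  have hsplit := Finset.sum_sdiff (f := fun l => Real.arctan (x l)) hsub
  have hcard : (Finset.univ \ {i, j} : Finset (Fin n)).card = n - 2 := by
    rw [Finset.card_sdiff_of_subset hsub, Finset.card_univ, Finset.card_pair hij, Fintype.card_fin]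
  have hbound : ∑ l ∈ Finset.univ \ {i, j}, Real.arctan (x l)
      ≤ ((n:ℝ) - 2) * (π/2) := by
    have := Finset.sum_le_card_nsmul (Finset.univ \ {i, j}) (fun l => Real.arctan (x l)) (π/2)
      (fun l _ => (Real.arctan_lt_pi_div_two (x l)).le)
    rw [hcard] at this
    have hc : ((n - 2 : ℕ) : ℝ) = (n:ℝ) - 2 := by
      rw [Nat.cast_sub hn]; norm_num
    calc ∑ l ∈ Finset.univ \ {i, j}, Real.arctan (x l) ≤ (n-2) • (π/2) := this
      _ = ((n - 2 : ℕ) : ℝ) * (π/2) := by rw [nsmul_eq_mul]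
      _ = ((n:ℝ) - 2) * (π/2) := by rw [hc]
  have hpair : ∑ l ∈ ({i, j} : Finset (Fin n)), Real.arctan (x l)
      = Real.arctan (x i) + Real.arctan (x j) := Finset.sum_pair hij
  have h1 : 0 < Real.arctan (x i) + Real.arctan (x j) := by
    rw [← hpair]
    have : ∑ l ∈ ({i,j} : Finset (Fin n)), Real.arctan (x l)
        = ∑ l, Real.arctan (x l) - ∑ l ∈ Finset.univ \ {i, j}, Real.arctan (x l) := by
      rw [← hsplit]; ring
    rw [this]; linarith
  have : Real.arctan (-(x j)) < Real.arctan (x i) := by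
    rw [Real.arctan_neg]; linarith
  have := Real.arctan_strictMono.lt_iff_lt.mp this
  linarith

-- harmonic sum bound on the supercritical region
lemma harmonic_bound {n : ℕ} (hn : 2 ≤ n) (x : Fin n → ℝ)
    (hx : ((n:ℝ) - 2) * (π/2) < ∑ i, Real.arctan (x i)) {k : Fin n} (hk : x k < 0) :
    ∑ i ∈ Finset.univ.erase k, (x i)⁻¹ < (-(x k))⁻¹ := by
  classical
  have hpos : ∀ i ∈ Finset.univ.erase k, 0 < x i := by
    intro i hi
    have hik : i ≠ k := (Finset.mem_erase.mp hi).1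
    have := pairwise_pos hn x hx hik
    linarith
  set b : ℝ := -(x k) with hb
  have hbpos : 0 < b := by simp [hb]; linarith
  -- sum of arctan over erase k
  have hsplit : Real.arctan (x k) + ∑ i ∈ Finset.univ.erase k, Real.arctan (x i)
      = ∑ i, Real.arctan (x i) := Finset.add_sum_erase _ (fun i => Real.arctan (x i)) (Finset.mem_univ k)
  have hcard : (Finset.univ.erase k).card = n - 1 := by
    rw [Finset.card_erase_of_mem (Finset.mem_univ k), Finset.card_univ, Fintype.card_fin]
  -- ∑_{i≠k} (π/2 - arctan x i) < π/2 - arctan b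
  have key : ∑ i ∈ Finset.univ.erase k, (π/2 - Real.arctan (x i)) < π/2 - Real.arctan b := by
    rw [Finset.sum_sub_distrib, Finset.sum_const, hcard, nsmul_eq_mul]
    have hc : ((n - 1 : ℕ) : ℝ) = (n:ℝ) - 1 := by
      rw [Nat.cast_sub (by omega)]; norm_num
    rw [hc]
    have harck : Real.arctan (x k) = -Real.arctan b := by
      rw [hb]; rw [Real.arctan_neg]; ring
    nlinarith [hsplit, hx]
  -- convert to arctan of inverses
  have hconv : ∀ i ∈ Finset.univ.erase k, π/2 - Real.arctan (x i) = Real.arctan (x i)⁻¹ :=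
    fun i hi => (Real.arctan_inv_of_pos (hpos i hi)).symm
  rw [Finset.sum_congr rfl hconv] at key
  have hbinv : π/2 - Real.arctan b = Real.arctan b⁻¹ := (Real.arctan_inv_of_pos hbpos).symm
  rw [hbinv] at key
  have hsum := arctan_sum_le (Finset.univ.erase k) (fun i => (x i)⁻¹)
    (fun i hi => (inv_nonneg.mpr (hpos i hi).le))
  have : Real.arctan (∑ i ∈ Finset.univ.erase k, (x i)⁻¹) < Real.arctan b⁻¹ := lt_of_le_of_lt hsum key
  exact Real.arctan_strictMono.lt_iff_lt.mp this

lemma percoord (u v s' t' a b : ℝ) (hu : 0 < u) (hv : 0 < v) (ha : 0 ≤ a) (hb : 0 ≤ b)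
    (hab : a + b = 1) (hz : 0 < a*u + b*v) :
    (a*u + b*v)⁻¹ * (a*s' + b*t')^2 ≤ a*s'^2*u⁻¹ + b*t'^2*v⁻¹ := by
  rw [inv_eq_one_div, inv_eq_one_div, inv_eq_one_div, div_mul_eq_mul_div, one_mul,
    mul_one_div, mul_one_div, div_add_div _ _ (ne_of_gt hu) (ne_of_gt hv),
    div_le_div_iff₀ hz (by positivity)]
  nlinarith [mul_nonneg (mul_nonneg ha hb) (sq_nonneg (t'*u - s'*v))]

-- two-point concavity of s ↦ (∑ 1/xᵢ)⁻¹
lemma harm_concave {ι : Type*} (s : Finset ι) (hs : s.Nonempty) (x y : ι → ℝ)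
    (hx : ∀ i ∈ s, 0 < x i) (hy : ∀ i ∈ s, 0 < y i) (a b : ℝ)
    (ha : 0 ≤ a) (hb : 0 ≤ b) (hab : a + b = 1) :
    a * (∑ i ∈ s, (x i)⁻¹)⁻¹ + b * (∑ i ∈ s, (y i)⁻¹)⁻¹
      ≤ (∑ i ∈ s, (a * x i + b * y i)⁻¹)⁻¹ := by
  set A := ∑ i ∈ s, (x i)⁻¹ with hA
  set B := ∑ i ∈ s, (y i)⁻¹ with hB
  set C := ∑ i ∈ s, (a * x i + b * y i)⁻¹ with hC
  obtain ⟨i₀, hi₀⟩ := hs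
  have hApos : 0 < A := Finset.sum_pos (fun i hi => inv_pos.2 (hx i hi)) ⟨i₀, hi₀⟩
  have hBpos : 0 < B := Finset.sum_pos (fun i hi => inv_pos.2 (hy i hi)) ⟨i₀, hi₀⟩
  have hzpos : ∀ i ∈ s, 0 < a * x i + b * y i := by
    intro i hi
    rcases ha.eq_or_lt with h | h
    · have hb1 : b = 1 := by linarith
      rw [← h, hb1]; simpa using hy i hi
    · have := mul_pos h (hx i hi)
      have := mul_nonneg hb (hy i hi).le
      linarith
  have hCpos : 0 < C := Finset.sum_pos (fun i hi => inv_pos.2 (hzpos i hi)) ⟨i₀, hi₀⟩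
  set s' := A⁻¹ with hs'
  set t' := B⁻¹ with ht'
  have hs'pos : 0 < s' := inv_pos.2 hApos
  have ht'pos : 0 < t' := inv_pos.2 hBpos
  have hDpos : 0 < a * s' + b * t' := by
    rcases ha.eq_or_lt with h | h
    · have hb1 : b = 1 := by linarith
      rw [← h, hb1]; simpa using ht'pos
    · have := mul_pos h hs'pos
      have := mul_nonneg hb ht'pos.le
      linarith
  -- sum per-coordinate bounds
  have hsum : C * (a*s' + b*t')^2 ≤ a*s'^2*A + b*t'^2*B := by
    rw [hC, Finset.sum_mul]
    have : a*s'^2*A + b*t'^2*B = ∑ i ∈ s, (a*s'^2*(x i)⁻¹ + b*t'^2*(y i)⁻¹) := by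
      rw [Finset.sum_add_distrib, ← Finset.mul_sum, ← Finset.mul_sum, hA, hB]
    rw [this]
    exact Finset.sum_le_sum fun i hi =>
      percoord (x i) (y i) s' t' a b (hx i hi) (hy i hi) ha hb hab (hzpos i hi)
  have hAs : s'^2 * A = s' := by
    rw [hs']; field_simp
  have hBt : t'^2 * B = t' := by
    rw [ht']; field_simp
  have hsum2 : C * (a*s' + b*t')^2 ≤ a*s' + b*t' := by
    calc C * (a*s' + b*t')^2 ≤ a*s'^2*A + b*t'^2*B := hsum
      _ = a*(s'^2*A) + b*(t'^2*B) := by ring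
      _ = a*s' + b*t' := by rw [hAs, hBt]
  have hCD1 : C * (a*s' + b*t') ≤ 1 := by
    have h := hsum2
    have h2 : (C * (a*s'+b*t')) * (a*s'+b*t') ≤ 1 * (a*s'+b*t') := by
      calc (C * (a*s'+b*t')) * (a*s'+b*t') = C * (a*s'+b*t')^2 := by ring
        _ ≤ a*s' + b*t' := hsum2
        _ = 1 * (a*s'+b*t') := by ring
    exact le_of_mul_le_mul_right h2 hDpos
  calc a * A⁻¹ + b * B⁻¹ = a*s' + b*t' := rfl
    _ ≤ C⁻¹ := by
        rw [inv_eq_one_div, le_div_iff₀ hCpos]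
        nlinarith [hCD1]
open Real Finset

lemma comb_pos {a b p q : ℝ} (ha : 0 ≤ a) (hb : 0 ≤ b) (hab : a + b = 1)
    (hp : 0 < p) (hq : 0 < q) : 0 < a*p + b*q := by
  rcases ha.eq_or_lt with h | h
  · have hb1 : b = 1 := by linarith
    rw [← h, hb1]; simpa using hq
  · nlinarith [mul_pos h hp, mul_nonneg hb hq.le]

lemma inv_flip1 {A c : ℝ} (hA : 0 < A) (hc : c < 0) (h : A < (-c)⁻¹) : 0 < c + A⁻¹ := by
  have h1 : A * A⁻¹ = 1 := mul_inv_cancel₀ (ne_of_gt hA)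
  have h2 : (-c) * (-c)⁻¹ = 1 := mul_inv_cancel₀ (by linarith)
  have hAi : 0 < A⁻¹ := inv_pos.2 hA
  nlinarith [h, h1, h2, hAi]

lemma inv_flip2 {A c : ℝ} (hA : 0 < A) (hc : c < 0) (h : 0 < c + A⁻¹) : A < (-c)⁻¹ := by
  have h1 : A * A⁻¹ = 1 := mul_inv_cancel₀ (ne_of_gt hA)
  have h2 : (-c) * (-c)⁻¹ = 1 := mul_inv_cancel₀ (by linarith)
  have hci : 0 < (-c)⁻¹ := inv_pos.2 (by linarith)
  nlinarith [h, h1, h2, hci, hA]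
lemma P2_core {n : ℕ} (hn : 2 ≤ n) (x y : Fin n → ℝ)
    (hx1 : ∀ i j, i ≠ j → 0 < x i + x j)
    (hx2 : ∀ k, x k < 0 → ∑ i ∈ Finset.univ.erase k, (x i)⁻¹ < (-(x k))⁻¹)
    (hy1 : ∀ i j, i ≠ j → 0 < y i + y j)
    (hy2 : ∀ k, y k < 0 → ∑ i ∈ Finset.univ.erase k, (y i)⁻¹ < (-(y k))⁻¹)
    (a b : ℝ) (ha : 0 ≤ a) (hb : 0 ≤ b) (hab : a + b = 1)
    (k : Fin n) (hxk : x k < 0) (hzk : a * x k + b * y k < 0) :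
    ∑ i ∈ Finset.univ.erase k, (a * x i + b * y i)⁻¹ < (-(a * x k + b * y k))⁻¹ := by
  classical
  have hene : (Finset.univ.erase k).Nonempty := by
    rw [← Finset.card_pos, Finset.card_erase_of_mem (Finset.mem_univ k),
      Finset.card_univ, Fintype.card_fin]
    omega
  have hxpos : ∀ i, i ≠ k → 0 < x i := by
    intro i hik; have := hx1 i k hik; linarith
  set A := ∑ i ∈ Finset.univ.erase k, (x i)⁻¹ with hA
  have hApos : 0 < A :=
    Finset.sum_pos (fun i hi => inv_pos.2 (hxpos i (Finset.mem_erase.mp hi).1)) hene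
  have hxkA : 0 < x k + A⁻¹ := inv_flip1 hApos hxk (hx2 k hxk)
  by_cases hycase : ∀ i, i ≠ k → 0 < y i
  · -- both x and y positive off k
    set B := ∑ i ∈ Finset.univ.erase k, (y i)⁻¹ with hB
    have hBpos : 0 < B :=
      Finset.sum_pos (fun i hi => inv_pos.2 (hycase i (Finset.mem_erase.mp hi).1)) hene
    have hykB : 0 < y k + B⁻¹ := by
      rcases lt_or_ge (y k) 0 with h | h
      · exact inv_flip1 hBpos h (hy2 k h)
      · have := inv_pos.2 hBpos; linarith
    set C := ∑ i ∈ Finset.univ.erase k, (a * x i + b * y i)⁻¹ with hC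
    have hzpos : ∀ i ∈ Finset.univ.erase k, 0 < a * x i + b * y i := fun i hi =>
      comb_pos ha hb hab (hxpos i (Finset.mem_erase.mp hi).1)
        (hycase i (Finset.mem_erase.mp hi).1)
    have hCpos : 0 < C := Finset.sum_pos (fun i hi => inv_pos.2 (hzpos i hi)) hene
    have hharm := harm_concave (Finset.univ.erase k) hene x y
      (fun i hi => hxpos i (Finset.mem_erase.mp hi).1)
      (fun i hi => hycase i (Finset.mem_erase.mp hi).1) a b ha hb hab
    have hkey : 0 < (a * x k + b * y k) + C⁻¹ := by
      have h1 : 0 < a * (x k + A⁻¹) + b * (y k + B⁻¹) := comb_pos ha hb hab hxkA hykB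
      have h2 : a * (x k + A⁻¹) + b * (y k + B⁻¹)
          = (a * x k + b * y k) + (a * A⁻¹ + b * B⁻¹) := by ring
      rw [h2] at h1
      linarith [hharm]
    exact inv_flip2 hCpos hzk hkey
  · -- y has a nonpositive coordinate j ≠ k
    push_neg at hycase
    obtain ⟨j, hjk, hyj⟩ := hycase
    have hyik : ∀ i, i ≠ j → 0 < y i := by
      intro i hij; have := hy1 i j hij; linarith
    have hyk : 0 < y k := hyik k (Ne.symm hjk)
    have hxj : 0 < x j := hxpos j hjk
    have hapos : 0 < a := by
      rcases ha.eq_or_lt with h | h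
      · exfalso; have hb1 : b = 1 := by linarith
        rw [← h, hb1] at hzk; simp at hzk; linarith
      · exact h
    have hdenom : 0 < x j - y j := by linarith
    set s := (-(y j)) / (x j - y j) with hs
    have hs0 : 0 ≤ s := div_nonneg (by linarith) hdenom.le
    have hs1 : s < 1 := by
      rw [hs, div_lt_one hdenom]; linarith
    have hsd : s * (x j - y j) = -(y j) := div_mul_cancel₀ _ (ne_of_gt hdenom)
    -- z j > 0 from pairwise positivity of the combination
    have hzj : 0 < a * x j + b * y j := by
      have h1 : 0 < a * (x j + x k) + b * (y j + y k) :=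
        comb_pos ha hb hab (hx1 j k hjk) (hy1 j k hjk)
      nlinarith [hzk]
    have has : s < a := by
      rw [hs, div_lt_iff₀ hdenom]; nlinarith [hzj, hab]
    set μ := (a - s) / (1 - s) with hμ
    have h1s : (0:ℝ) < 1 - s := by linarith
    have hμpos : 0 < μ := div_pos (by linarith) h1s
    have hμle : μ ≤ 1 := by
      rw [hμ, div_le_one h1s]; linarith
    set w : Fin n → ℝ := fun i => s * x i + (1 - s) * y i with hw
    have hwj : w j = 0 := by
      simp only [hw]; nlinarith [hsd]
    have hwk : 0 < w k := by
      have h1 : 0 < s * (x j + x k) + (1 - s) * (y j + y k) :=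
        comb_pos hs0 h1s.le (by ring) (hx1 j k hjk) (hy1 j k hjk)
      have h2 : s * (x j + x k) + (1 - s) * (y j + y k) = (w j) + (w k) := by
        simp only [hw]; ring
      rw [h2, hwj] at h1; linarith
    have hwnn : ∀ i, i ≠ k → 0 ≤ w i := by
      intro i hik
      by_cases hij : i = j
      · rw [hij, hwj]
      · have := hyik i hij
        have := hxpos i hik
        positivity
    have hid : ∀ i, a * x i + b * y i = μ * x i + (1 - μ) * w i := by
      intro i
      have hbeq : b = 1 - a := by linarith
      rw [hμ, hw, hbeq]
      field_simp
      ring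
    have hzge : ∀ i, i ≠ k → μ * x i ≤ a * x i + b * y i := by
      intro i hik
      rw [hid i]
      nlinarith [hwnn i hik, hμle]
    have hzposi : ∀ i, i ≠ k → 0 < a * x i + b * y i := by
      intro i hik
      exact lt_of_lt_of_le (mul_pos hμpos (hxpos i hik)) (hzge i hik)
    set C := ∑ i ∈ Finset.univ.erase k, (a * x i + b * y i)⁻¹ with hC
    have hCpos : 0 < C :=
      Finset.sum_pos (fun i hi => inv_pos.2 (hzposi i (Finset.mem_erase.mp hi).1)) hene
    have hCle : C ≤ μ⁻¹ * A := by
      rw [hA, Finset.mul_sum]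
      apply Finset.sum_le_sum
      intro i hi
      have hik := (Finset.mem_erase.mp hi).1
      have h1 : (a * x i + b * y i)⁻¹ ≤ (μ * x i)⁻¹ :=
        inv_anti₀ (mul_pos hμpos (hxpos i hik)) (hzge i hik)
      rw [mul_inv] at h1
      exact h1
    have hCinv : μ * A⁻¹ ≤ C⁻¹ := by
      have h1 : C ≤ μ⁻¹ * A := hCle
      have h2 : 0 < μ⁻¹ * A := mul_pos (inv_pos.2 hμpos) hApos
      have h3 := inv_anti₀ hCpos h1
      rw [mul_inv, inv_inv] at h3
      linarith
    have hzkge : μ * x k ≤ a * x k + b * y k := by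
      rw [hid k]
      have h0 : 0 ≤ (1 - μ) * w k := mul_nonneg (by linarith) hwk.le
      linarith
    have hkey : 0 < (a * x k + b * y k) + C⁻¹ := by
      have h1 : 0 < μ * (x k + A⁻¹) := mul_pos hμpos hxkA
      have h2 : μ * (x k + A⁻¹) = μ * x k + μ * A⁻¹ := by ring
      linarith [hzkge, hCinv]
    exact inv_flip2 hCpos hzk hkey
lemma P_preserved {n : ℕ} (hn : 2 ≤ n) (x y : Fin n → ℝ)
    (hx1 : ∀ i j, i ≠ j → 0 < x i + x j)
    (hx2 : ∀ k, x k < 0 → ∑ i ∈ Finset.univ.erase k, (x i)⁻¹ < (-(x k))⁻¹)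
    (hy1 : ∀ i j, i ≠ j → 0 < y i + y j)
    (hy2 : ∀ k, y k < 0 → ∑ i ∈ Finset.univ.erase k, (y i)⁻¹ < (-(y k))⁻¹)
    (a b : ℝ) (ha : 0 ≤ a) (hb : 0 ≤ b) (hab : a + b = 1) :
    (∀ i j, i ≠ j → 0 < (a * x i + b * y i) + (a * x j + b * y j)) ∧
    (∀ k, a * x k + b * y k < 0 →
      ∑ i ∈ Finset.univ.erase k, (a * x i + b * y i)⁻¹ < (-(a * x k + b * y k))⁻¹) := by
  constructor
  · intro i j hij
    have := comb_pos ha hb hab (hx1 i j hij) (hy1 i j hij)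
    nlinarith [this]
  · intro k hzk
    rcases lt_or_ge (x k) 0 with h | h
    · exact P2_core hn x y hx1 hx2 hy1 hy2 a b ha hb hab k h hzk
    · have hyk : y k < 0 := by
        by_contra hyk
        push_neg at hyk
        have h1 : 0 ≤ a * x k := mul_nonneg ha h
        have h2 : 0 ≤ b * y k := mul_nonneg hb hyk
        linarith
      have hzk' : b * y k + a * x k < 0 := by linarith
      have := P2_core hn y x hy1 hy2 hx1 hx2 b a hb ha (by linarith) k hyk hzk'
      have hcomm : ∀ i : Fin n, b * y i + a * x i = a * x i + b * y i := fun i => by ring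
      simp only [hcomm] at this
      exact this

lemma crit_ineq {n : ℕ} (hn : 2 ≤ n) (z w : Fin n → ℝ)
    (hz1 : ∀ i j, i ≠ j → 0 < z i + z j)
    (hz2 : ∀ k, z k < 0 → ∑ i ∈ Finset.univ.erase k, (z i)⁻¹ < (-(z k))⁻¹)
    (hw : ∑ i, w i = 0) (hwne : ∃ i, w i ≠ 0) :
    0 < ∑ i, z i * (w i)^2 := by
  classical
  by_cases hall : ∀ i, 0 < z i
  · obtain ⟨i₀, hi₀⟩ := hwne
    apply Finset.sum_pos' (fun i _ => mul_nonneg (hall i).le (sq_nonneg _))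
    refine ⟨i₀, Finset.mem_univ _, mul_pos (hall i₀) ?_⟩
    exact lt_of_le_of_ne (sq_nonneg _) (Ne.symm (pow_ne_zero 2 hi₀))
  · push_neg at hall
    obtain ⟨k, hk⟩ := hall
    have hzk0 : z k ≤ 0 := hk
    have hzpos : ∀ i, i ≠ k → 0 < z i := by
      intro i hik; have := hz1 i k hik; linarith
    have hene : (Finset.univ.erase k).Nonempty := by
      rw [← Finset.card_pos, Finset.card_erase_of_mem (Finset.mem_univ k),
        Finset.card_univ, Fintype.card_fin]
      omega
    have hsplit : ∑ i, z i * (w i)^2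
        = z k * (w k)^2 + ∑ i ∈ Finset.univ.erase k, z i * (w i)^2 :=
      (Finset.add_sum_erase _ (fun i => z i * (w i)^2) (Finset.mem_univ k)).symm
    have hwsplit : w k = -∑ i ∈ Finset.univ.erase k, w i := by
      have := Finset.add_sum_erase _ w (Finset.mem_univ k)
      rw [hw] at this
      linarith
    have hex : ∃ i ∈ Finset.univ.erase k, w i ≠ 0 := by
      by_contra hco
      push_neg at hco
      have hsum0 : ∑ i ∈ Finset.univ.erase k, w i = 0 :=
        Finset.sum_eq_zero fun i hi => hco i hi
      have hwk0 : w k = 0 := by rw [hwsplit, hsum0]; ring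
      obtain ⟨i₀, hi₀⟩ := hwne
      by_cases hik : i₀ = k
      · rw [hik] at hi₀; exact hi₀ hwk0
      · exact hi₀ (hco i₀ (Finset.mem_erase.mpr ⟨hik, Finset.mem_univ _⟩))
    obtain ⟨i₀, hi₀mem, hi₀⟩ := hex
    have hT : 0 < ∑ i ∈ Finset.univ.erase k, z i * (w i)^2 := by
      apply Finset.sum_pos'
        (fun i hi => mul_nonneg (hzpos i (Finset.mem_erase.mp hi).1).le (sq_nonneg _))
      exact ⟨i₀, hi₀mem, mul_pos (hzpos i₀ (Finset.mem_erase.mp hi₀mem).1)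
        (lt_of_le_of_ne (sq_nonneg _) (Ne.symm (pow_ne_zero 2 hi₀)))⟩
    rcases eq_or_lt_of_le hzk0 with hzk | hzk
    · have hzz : z k * (w k)^2 = 0 := by rw [hzk]; ring
      rw [hsplit, hzz]
      simpa using hT
    · -- z k < 0 : Cauchy–Schwarz step
      set T := ∑ i ∈ Finset.univ.erase k, z i * (w i)^2 with hTdef
      set A := ∑ i ∈ Finset.univ.erase k, (z i)⁻¹ with hAdef
      have hApos : 0 < A :=
        Finset.sum_pos (fun i hi => inv_pos.2 (hzpos i (Finset.mem_erase.mp hi).1)) hene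
      have hA := hz2 k hzk
      have hCS : (∑ i ∈ Finset.univ.erase k, w i)^2 ≤ A * T := by
        have key := Finset.sum_mul_sq_le_sq_mul_sq (Finset.univ.erase k)
          (fun i => Real.sqrt (z i)⁻¹) (fun i => Real.sqrt (z i) * w i)
        have h1 : ∀ i ∈ Finset.univ.erase k,
            Real.sqrt (z i)⁻¹ * (Real.sqrt (z i) * w i) = w i := by
          intro i hi
          have hzi := hzpos i (Finset.mem_erase.mp hi).1
          rw [Real.sqrt_inv, ← mul_assoc, inv_mul_cancel₀ (ne_of_gt (Real.sqrt_pos.2 hzi)),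
            one_mul]
        have h2 : ∀ i ∈ Finset.univ.erase k, (Real.sqrt (z i)⁻¹)^2 = (z i)⁻¹ := by
          intro i hi
          exact Real.sq_sqrt (inv_nonneg.2 (hzpos i (Finset.mem_erase.mp hi).1).le)
        have h3 : ∀ i ∈ Finset.univ.erase k, (Real.sqrt (z i) * w i)^2 = z i * (w i)^2 := by
          intro i hi
          rw [mul_pow, Real.sq_sqrt (hzpos i (Finset.mem_erase.mp hi).1).le]
        rw [Finset.sum_congr rfl h1, Finset.sum_congr rfl h2, Finset.sum_congr rfl h3] at key
        exact key
      have hwk2 : (w k)^2 ≤ A * T := by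
        rw [hwsplit, neg_sq]; exact hCS
      have h1 : (-(z k)) * A < 1 := by
        have h2 : 0 < -(z k) := by linarith
        have := mul_lt_mul_of_pos_left hA h2
        rw [mul_inv_cancel₀ (ne_of_gt h2)] at this
        exact this
      rw [hsplit]
      have hstep1 : (-(z k)) * (w k)^2 ≤ (-(z k)) * (A * T) :=
        mul_le_mul_of_nonneg_left hwk2 (by linarith)
      have hstep2 : ((-(z k)) * A) * T < 1 * T := mul_lt_mul_of_pos_right h1 hT
      nlinarith [hstep1, hstep2]
lemma key_segment {n : ℕ} (hn : 2 ≤ n) (x y : Fin n → ℝ)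
    (hx : ((n:ℝ) - 2) * (π/2) < ∑ i, Real.arctan (x i))
    (hy : ((n:ℝ) - 2) * (π/2) < ∑ i, Real.arctan (y i)) :
    ∀ t ∈ Set.Icc (0:ℝ) 1,
      min (∑ i, Real.arctan (x i)) (∑ i, Real.arctan (y i))
        ≤ ∑ i, Real.arctan (x i + t * (y i - x i)) := by
  classical
  set v : Fin n → ℝ := fun i => y i - x i with hv
  set g : ℝ → ℝ := fun t => ∑ i, Real.arctan (x i + t * v i) with hgdef
  set G1 : ℝ → ℝ := fun t => ∑ i, v i * (1 + (x i + t * v i)^2)⁻¹ with hG1def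
  have hgt : ∀ t : ℝ, HasDerivAt g (G1 t) t := by
    intro t
    apply HasDerivAt.fun_sum
    intro i _
    have h1 : HasDerivAt (fun u : ℝ => x i + u * v i) (v i) t := by
      simpa using ((hasDerivAt_id t).mul_const (v i)).const_add (x i)
    have h2 := h1.arctan
    exact h2.congr_deriv (by rw [inv_eq_one_div]; ring)
  have hg0 : g 0 = ∑ i, Real.arctan (x i) := by
    simp [hgdef]
  have hg1 : g 1 = ∑ i, Real.arctan (y i) := by
    simp [hgdef, hv]
  have hgc : Continuous g := by
    have : Differentiable ℝ g := fun t => (hgt t).differentiableAt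
    exact this.continuous
  intro t ht
  rw [← hg0, ← hg1]
  show min (g 0) (g 1) ≤ g t
  by_cases hvz : ∀ i, v i = 0
  · have : g t = g 0 := by
      simp only [hgdef]
      apply Finset.sum_congr rfl
      intro i _
      rw [hvz i]
      ring_nf
    rw [this]
    exact min_le_left _ _
  push_neg at hvz
  obtain ⟨i₁, hi₁⟩ := hvz
  obtain ⟨t0, ht0mem, ht0min⟩ := (isCompact_Icc).exists_isMinOn
    (Set.nonempty_Icc.2 zero_le_one) hgc.continuousOn
  rcases le_or_gt (min (g 0) (g 1)) (g t0) with hmin | hmin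
  · exact le_trans hmin (ht0min ht)
  exfalso
  have ht00 : t0 ≠ 0 := by
    intro h; rw [h] at hmin; exact absurd (min_le_left (g 0) (g 1)) (not_le.2 hmin)
  have ht01 : t0 ≠ 1 := by
    intro h; rw [h] at hmin; exact absurd (min_le_right (g 0) (g 1)) (not_le.2 hmin)
  have ht0i : t0 ∈ Set.Ioo (0:ℝ) 1 :=
    ⟨lt_of_le_of_ne ht0mem.1 (Ne.symm ht00), lt_of_le_of_ne ht0mem.2 ht01⟩
  -- P properties at endpoints and at z t0
  have hPx1 : ∀ i j, i ≠ j → 0 < x i + x j := fun i j hij => pairwise_pos hn x hx hij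
  have hPx2 : ∀ k, x k < 0 → ∑ i ∈ Finset.univ.erase k, (x i)⁻¹ < (-(x k))⁻¹ :=
    fun k hk => harmonic_bound hn x hx hk
  have hPy1 : ∀ i j, i ≠ j → 0 < y i + y j := fun i j hij => pairwise_pos hn y hy hij
  have hPy2 : ∀ k, y k < 0 → ∑ i ∈ Finset.univ.erase k, (y i)⁻¹ < (-(y k))⁻¹ :=
    fun k hk => harmonic_bound hn y hy hk
  obtain ⟨hzP1, hzP2⟩ := P_preserved hn x y hPx1 hPx2 hPy1 hPy2 (1 - t0) t0
    (by linarith [ht0i.2]) (by linarith [ht0i.1]) (by ring)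
  have hzeq : ∀ i, (1 - t0) * x i + t0 * y i = x i + t0 * v i := by
    intro i; rw [hv]; ring
  simp only [hzeq] at hzP1 hzP2
  -- critical point
  have hloc : IsLocalMin g t0 := ht0min.isLocalMin (Icc_mem_nhds ht0i.1 ht0i.2)
  have hG1t0 : G1 t0 = 0 := by
    rw [← (hgt t0).deriv]; exact hloc.deriv_eq_zero
  set w : Fin n → ℝ := fun i => v i * (1 + (x i + t0 * v i)^2)⁻¹ with hw
  have hwsum : ∑ i, w i = 0 := hG1t0
  have hwne : ∃ i, w i ≠ 0 := by
    refine ⟨i₁, mul_ne_zero hi₁ (inv_ne_zero (by positivity))⟩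
  have hW : 0 < ∑ i, (x i + t0 * v i) * (w i)^2 :=
    crit_ineq hn (fun i => x i + t0 * v i) w hzP1 hzP2 hwsum hwne
  set W := ∑ i, (x i + t0 * v i) * (w i)^2 with hWdef
  -- derivative of G1 at t0
  have hG1d : HasDerivAt G1 (-2 * W) t0 := by
    have hterm : ∀ i : Fin n, HasDerivAt (fun u => v i * (1 + (x i + u * v i)^2)⁻¹)
        (v i * (-(2 * (x i + t0 * v i) * v i) / (1 + (x i + t0 * v i)^2)^2)) t0 := by
      intro i
      have h1 : HasDerivAt (fun u : ℝ => x i + u * v i) (v i) t0 := by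
        simpa using ((hasDerivAt_id t0).mul_const (v i)).const_add (x i)
      have h2 : HasDerivAt (fun u : ℝ => 1 + (x i + u * v i)^2)
          (2 * (x i + t0 * v i) * v i) t0 := by
        have := (h1.pow 2).const_add 1
        exact this.congr_deriv (by push_cast; ring)
      have h3 := h2.inv (by positivity)
      exact h3.const_mul (v i)
    have hsum := HasDerivAt.fun_sum (fun i (_ : i ∈ Finset.univ) => hterm i)
    refine HasDerivAt.congr_deriv hsum ?_
    symm
    rw [hWdef, Finset.mul_sum]
    apply Finset.sum_congr rfl
    intro i _
    rw [hw]
    have hpos : (0:ℝ) < 1 + (x i + t0 * v i)^2 := by positivity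
    field_simp
  -- G1 is eventually negative to the right of t0
  have hslope : Filter.Tendsto (slope G1 t0) (nhdsWithin t0 (Set.Ioi t0)) (nhds (-2 * W)) := by
    have h1 := hasDerivAt_iff_tendsto_slope.mp hG1d
    exact h1.mono_left (nhdsWithin_mono t0 (fun u hu => ne_of_gt hu))
  have hneg : ∀ᶠ u in nhdsWithin t0 (Set.Ioi t0), G1 u < 0 := by
    have h2 : ∀ᶠ u in nhdsWithin t0 (Set.Ioi t0), slope G1 t0 u < 0 :=
      Filter.Tendsto.eventually_lt_const (by nlinarith [hW]) hslope
    filter_upwards [h2, self_mem_nhdsWithin] with u h3 h4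
    rw [slope_def_field, hG1t0, sub_zero] at h3
    have h5 : (0:ℝ) < u - t0 := by
      have : t0 < u := h4
      linarith
    by_contra hco
    push_neg at hco
    have := div_nonneg hco h5.le
    linarith
  obtain ⟨u', hu'mem, hu'sub⟩ := mem_nhdsGT_iff_exists_Ioo_subset.mp hneg
  set u'' := min u' 1 with hu''
  have hu''gt : t0 < u'' := lt_min hu'mem ht0i.2
  have hanti : StrictAntiOn g (Set.Icc t0 u'') := by
    apply strictAntiOn_of_deriv_neg (convex_Icc _ _) hgc.continuousOn
    intro u hu
    rw [interior_Icc] at hu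
    rw [(hgt u).deriv]
    apply hu'sub
    exact ⟨hu.1, lt_of_lt_of_le hu.2 (min_le_left _ _)⟩
  set τ := (t0 + u'')/2 with hτ
  have hτmem : τ ∈ Set.Icc t0 u'' := by
    constructor <;> [linarith [hu''gt]; linarith [hu''gt]]
  have hlt : g τ < g t0 := by
    have h1 : t0 ∈ Set.Icc t0 u'' := ⟨le_refl _, hu''gt.le⟩
    have h2 : t0 < τ := by rw [hτ]; linarith [hu''gt]
    exact hanti h1 hτmem h2
  have hτ01 : τ ∈ Set.Icc (0:ℝ) 1 := by
    constructor
    · linarith [ht0i.1, hτmem.1]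
    · have : u'' ≤ 1 := min_le_right _ _
      linarith [hτmem.2]
  exact absurd (ht0min hτ01) (not_le.2 hlt)
theorem stmt_10 (n : ℕ) (hn : 2 ≤ n) (c : ℝ) (hc : (n - 2 : ℝ) * (Real.pi / 2) ≤ c) :
    Convex ℝ {lam : Fin n → ℝ | c ≤ ∑ i, Real.arctan (lam i)} := by
  intro x hx y hy a b ha hb hab
  simp only [Set.mem_setOf_eq] at hx hy ⊢
  have hne : Nonempty (Fin n) := ⟨⟨0, by omega⟩⟩
  have habxy : ∀ i : Fin n, (a • x + b • y) i = a * x i + b * y i := by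
    intro i; simp [Pi.add_apply, Pi.smul_apply, smul_eq_mul]
  have hgoal : ∑ i, Real.arctan ((a • x + b • y) i) = ∑ i, Real.arctan (a * x i + b * y i) :=
    Finset.sum_congr rfl fun i _ => by rw [habxy i]
  rw [hgoal]
  have hkey : ∀ ε : ℝ, 0 < ε → c ≤ ∑ i, Real.arctan (a * x i + b * y i + ε) := by
    intro ε hε
    set x' : Fin n → ℝ := fun i => x i + ε with hx'def
    set y' : Fin n → ℝ := fun i => y i + ε with hy'def
    have hsx : ∑ i, Real.arctan (x i) < ∑ i, Real.arctan (x' i) := by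
      apply Finset.sum_lt_sum_of_nonempty Finset.univ_nonempty
      intro i _
      exact Real.arctan_strictMono (by simp [hx'def]; linarith)
    have hsy : ∑ i, Real.arctan (y i) < ∑ i, Real.arctan (y' i) := by
      apply Finset.sum_lt_sum_of_nonempty Finset.univ_nonempty
      intro i _
      exact Real.arctan_strictMono (by simp [hy'def]; linarith)
    have hx'c : ((n:ℝ) - 2) * (π/2) < ∑ i, Real.arctan (x' i) := lt_of_le_of_lt (le_trans hc hx) hsx
    have hy'c : ((n:ℝ) - 2) * (π/2) < ∑ i, Real.arctan (y' i) := lt_of_le_of_lt (le_trans hc hy) hsy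
    have hb1 : b ≤ 1 := by linarith
    have hks := key_segment hn x' y' hx'c hy'c b ⟨hb, hb1⟩
    have heq : ∀ i : Fin n, x' i + b * (y' i - x' i) = a * x i + b * y i + ε := by
      intro i
      have haeq : a = 1 - b := by linarith
      rw [hx'def, hy'def, haeq]
      ring
    have heqs : ∑ i, Real.arctan (x' i + b * (y' i - x' i))
        = ∑ i, Real.arctan (a * x i + b * y i + ε) :=
      Finset.sum_congr rfl fun i _ => by rw [heq i]
    rw [heqs] at hks
    have hminc : c ≤ min (∑ i, Real.arctan (x' i)) (∑ i, Real.arctan (y' i)) :=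
      le_min (by linarith) (by linarith)
    linarith
  -- pass to the limit ε → 0⁺
  have hcont : Filter.Tendsto (fun ε : ℝ => ∑ i, Real.arctan (a * x i + b * y i + ε))
      (nhdsWithin 0 (Set.Ioi 0)) (nhds (∑ i, Real.arctan (a * x i + b * y i))) := by
    have h1 : Continuous (fun ε : ℝ => ∑ i, Real.arctan (a * x i + b * y i + ε)) := by
      apply continuous_finset_sum
      intro i _
      exact Real.continuous_arctan.comp (continuous_const.add continuous_id)
    have h2 := h1.continuousAt (x := (0:ℝ))
    have h3 : ∑ i, Real.arctan (a * x i + b * y i + 0) = ∑ i, Real.arctan (a * x i + b * y i) := by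
      simp
    rw [ContinuousAt, h3] at h2
    exact h2.mono_left nhdsWithin_le_nhds
  exact ge_of_tendsto hcont (Filter.eventually_iff_exists_mem.mpr
    ⟨Set.Ioi 0, self_mem_nhdsWithin, fun ε hε => hkey ε hε⟩)
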